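/- Agent 2 understands an explanation E at world w (i.e., agent 2's derived term of claim(E) with respect to E is ground) if and only if (a) for every hypothesis F ∈ H(E) there exists a ground term t with M,w ⊨ [[t]]_2 F, and (b) for every derived formula G ∈ D(E) there exists a ground term s with M,w ⊨ [[s]]_2 (A_1 → (··· → (A_n → G)···)), where A_1,…,A_n = Pr(E,G) are the premises of G in E. -/

import Mathlib

open Classical

/-- Propositional formulas. -/
inductive PropForm : Type
  | atom : ℕ → PropForm
  | fls : PropForm
  | imp : PropForm → PropForm → PropForm
  deriving DecidableEq

/-- Justification terms: constants, variables (indexed by a formula and a list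
of formulas), and application. -/
inductive Tm : Type
  | const : ℕ → Tm
  | var : PropForm → List PropForm → Tm
  | app : Tm → Tm → Tm
  deriving DecidableEq

/-- Ground terms: terms without variables. -/
def Tm.Ground : Tm → Prop
  | .const _ => True
  | .var _ _ => False
  | .app s t => s.Ground ∧ t.Ground

/-- Subterm relation. -/
def Tm.Subterm (s : Tm) : Tm → Prop
  | .app a b => s = Tm.app a b ∨ s.Subterm a ∨ s.Subterm b
  | t => s = t

/-- Substitution of a term for a justification variable. -/
def Tm.subst (x : PropForm × List PropForm) (r : Tm) : Tm → Tm
  | .const n => .const n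
  | .var F L => if (F, L) = x then r else .var F L
  | .app a b => .app (Tm.subst x r a) (Tm.subst x r b)

/-- `bigImp [A1,…,An] B = A1 → (… → (An → B)…)`. -/
def bigImp (L : List PropForm) (B : PropForm) : PropForm := L.foldr PropForm.imp B

/-- Formulas of the full language 𝓛J. -/
inductive JForm : Type
  | atom : ℕ → JForm
  | fls : JForm
  | imp : JForm → JForm → JForm
  | box : Fin 2 → JForm → JForm
  | just : Fin 2 → Tm → PropForm → JForm

/-- Embedding of propositional formulas into 𝓛J. -/
def PropForm.toJ : PropForm → JForm
  | .atom n => .atom n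
  | .fls => .fls
  | .imp A B => .imp A.toJ B.toJ

/-- A multi-agent frame: agents 0 (explainer, "agent 1") and 1 (explainee,
"agent 2"), worlds, reflexive transitive accessibility relations, evidence
functions, and a valuation. -/
structure Frame where
  W : Type
  ne : Nonempty W
  R : Fin 2 → W → W → Prop
  refl : ∀ i, Reflexive (R i)
  trans : ∀ i, Transitive (R i)
  star : Fin 2 → Tm → W → Set PropForm
  val : ℕ → Set W

/-- Truth of propositional formulas. -/
def Frame.psat (M : Frame) : M.W → PropForm → Prop := fun w F =>
  match F with
  | .atom n => w ∈ M.val n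
  | .fls => False
  | .imp A B => M.psat w A → M.psat w B

/-- Truth for the full language. -/
def Frame.sat (M : Frame) : M.W → JForm → Prop := fun w φ =>
  match φ with
  | .atom n => w ∈ M.val n
  | .fls => False
  | .imp A B => M.sat w A → M.sat w B
  | .box i A => ∀ u, M.R i w u → M.sat u A
  | .just i t F => F ∈ M.star i t w

/-- Justification yields belief (for ground terms). -/
def Frame.JYB (M : Frame) : Prop :=
  ∀ i (t : Tm) w F, t.Ground → F ∈ M.star i t w → ∀ u, M.R i w u → M.psat u F

/-- Finiteness constraints on evidence functions. -/
def Frame.FinEv (M : Frame) : Prop :=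
  (∀ i w, {t : Tm | t.Ground ∧ (M.star i t w).Nonempty}.Finite) ∧
  (∀ i (t : Tm) w, t.Ground → (M.star i t w).Finite)

/-- Multi-agent modular models. -/
def Frame.Modular (M : Frame) : Prop := M.JYB ∧ M.FinEv

/-- Explanations: finite trees of propositional formulas. `node cs B` has
claim `B`; it is a hypothesis (leaf) if `cs = []` and a derived formula
otherwise. -/
inductive Expl : Type
  | node : List Expl → PropForm → Expl

def Expl.claim : Expl → PropForm
  | .node _ B => B

def Expl.children : Expl → List Expl
  | .node cs _ => cs

/-- Hypotheses (leaves) of an explanation. -/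
def Expl.hyps : Expl → List PropForm
  | .node [] B => [B]
  | .node (c :: cs) _ => ((c :: cs).attach).flatMap (fun x => x.1.hyps)
decreasing_by
  have := List.sizeOf_lt_of_mem x.2
  simp only [Expl.node.sizeOf_spec] at *
  omega

/-- Deduction steps of an explanation: pairs (premises, derived formula). -/
def Expl.steps : Expl → List (List PropForm × PropForm)
  | .node [] _ => []
  | .node (c :: cs) B =>
      ((c :: cs).map Expl.claim, B) :: ((c :: cs).attach).flatMap (fun x => x.1.steps)
decreasing_by
  have := List.sizeOf_lt_of_mem x.2
  simp only [Expl.node.sizeOf_spec] at *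
  omega

/-- All subtrees of an explanation (including itself). -/
def Expl.subtrees : Expl → List Expl
  | .node cs B => .node cs B :: (cs.attach).flatMap (fun x => x.1.subtrees)
decreasing_by
  have := List.sizeOf_lt_of_mem x.2
  simp only [Expl.node.sizeOf_spec] at *
  omega

/-- Set of derived formulas of an explanation. -/
def Expl.dset (E : Expl) : Set PropForm := {G | ∃ L, (L, G) ∈ E.steps}

/-- `DTerm M i w E t`: `t` is a derived term of `claim E` with respect to the
explanation `E`, constructed by agent `i` at world `w`.  For a hypothesis the
"derived term" is a ground justifying term if one exists, and the variable
`x_A` otherwise; for a derived formula it is `d·t₁⋯tₙ` if the agent has a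
ground justification `d` of the deduction step, and the variable
`x_B^{Pr(E,B)}` otherwise. -/
inductive DTerm (M : Frame) (i : Fin 2) (w : M.W) : Expl → Tm → Prop
  | hyp_just {A : PropForm} {t : Tm} :
      t.Ground → A ∈ M.star i t w → DTerm M i w (.node [] A) t
  | hyp_var {A : PropForm} :
      (¬ ∃ t : Tm, t.Ground ∧ A ∈ M.star i t w) →
      DTerm M i w (.node [] A) (.var A [])
  | step {cs : List Expl} {B : PropForm} {d : Tm} {ts : List Tm}
      (hne : cs ≠ []) (hd : d.Ground)
      (hj : bigImp (cs.map Expl.claim) B ∈ M.star i d w)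
      (hlen : ts.length = cs.length)
      (hts : List.Forall₂ (DTerm M i w) cs ts) :
      DTerm M i w (.node cs B) (ts.foldl Tm.app d)
  | step_var {cs : List Expl} {B : PropForm} (hne : cs ≠ [])
      (h : ¬ ∃ d : Tm, d.Ground ∧ bigImp (cs.map Expl.claim) B ∈ M.star i d w) :
      DTerm M i w (.node cs B) (.var B (cs.map Expl.claim))

/-- Agent 2 understands `E` at `w` iff its derived term of `claim E` w.r.t.
`E` is ground. -/
def Understands (M : Frame) (w : M.W) (E : Expl) : Prop :=
  ∃ t : Tm, DTerm M 1 w E t ∧ t.Ground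

/-- The updated evidence function of agent 2 after learning from explanation
`E` at `w0`, where `Dts` records the derived term of each derived formula of
`E` and `r` is the derived term of `claim E`. -/
noncomputable def learnStar (M : Frame) (w0 : M.W) (E : Expl)
    (Dts : List (PropForm × Tm)) (r : Tm) : Fin 2 → Tm → M.W → Set PropForm :=
  fun i t w =>
    if i = 1 ∧ w = w0 then
      M.star i t w ∪ {F | (F, t) ∈ Dts} ∪
        {G | ∃ s : Tm, G ∈ M.star i s w ∧
          (t = Tm.subst (E.claim, []) r s ∨ t = Tm.subst (E.claim, E.hyps) r s)}
    else M.star i t w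

/-- The model `M|(2, w0, E)` after agent 2 learns from explanation `E`. -/
noncomputable def learnModel (M : Frame) (w0 : M.W) (E : Expl)
    (Dts : List (PropForm × Tm)) (r : Tm) : Frame :=
  { M with star := learnStar M w0 E Dts r }

/-- `Dts` and `r` are genuine derived-term data for `E`: every entry of `Dts`
is a derived term of a derived formula of `E`, every derived formula of `E`
has its derived term recorded in `Dts`, `r` is a derived term of `claim E`
w.r.t. `E`, and (when `E` is not a single hypothesis) `r` is the recorded
derived term of `claim E`. -/
def GoodDerived (M : Frame) (w : M.W) (E : Expl)
    (Dts : List (PropForm × Tm)) (r : Tm) : Prop :=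
  DTerm M 1 w E r ∧
  (∀ p ∈ Dts, ∃ sub ∈ E.subtrees, sub.children ≠ [] ∧ sub.claim = p.1 ∧
      DTerm M 1 w sub p.2) ∧
  (∀ sub ∈ E.subtrees, sub.children ≠ [] →
      ∃ t : Tm, (sub.claim, t) ∈ Dts ∧ DTerm M 1 w sub t) ∧
  (E.children ≠ [] → (E.claim, r) ∈ Dts)

/-- Restriction of a model to a set of worlds (update by a set of worlds). -/
def Frame.restrict (M : Frame) (X : Set M.W) (hne : X.Nonempty) : Frame where
  W := X
  ne := hne.to_subtype
  R i u v := M.R i u.1 v.1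
  refl i u := M.refl i u.1
  trans i _ _ _ h1 h2 := M.trans i h1 h2
  star i t u := M.star i t u.1
  val n := {u | u.1 ∈ M.val n}

/-- The feedback value of agent 2 on a node of an explanation: a hypothesis
gets value 1 iff agent 2 can justify it by a ground term; a derived formula
gets value 1 iff agent 2 understands the subexplanation rooted at it. -/
def FVal (M : Frame) (w : M.W) : Expl → Prop
  | .node [] A => ∃ t : Tm, t.Ground ∧ A ∈ M.star 1 t w
  | .node (c :: cs) B => Understands M w (.node (c :: cs) B)

/-- The truth set by which agent 1 updates upon receiving agent 2's feedback
on the node `sub` of an explanation. -/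
noncomputable def Uset (M : Frame) (w : M.W) : Expl → Set M.W
  | .node [] A =>
      if FVal M w (.node [] A) then {u | ∃ t : Tm, t.Ground ∧ A ∈ M.star 1 t u}
      else {u | ¬ ∃ t : Tm, t.Ground ∧ A ∈ M.star 1 t u}
  | .node (c :: cs) B =>
      if FVal M w (.node (c :: cs) B) then
        {u | ∃ t : Tm, t.Ground ∧ bigImp ((c :: cs).map Expl.claim) B ∈ M.star 1 t u}
      else if ∀ c' ∈ c :: cs, FVal M w c' then
        {u | ¬ ∃ t : Tm, t.Ground ∧ bigImp ((c :: cs).map Expl.claim) B ∈ M.star 1 t u}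
      else Set.univ

/-- The combined truth set of the series of updates by agent 2's feedback on
all nodes of explanation `E`. -/
noncomputable def FeedbackSet (M : Frame) (w : M.W) (E : Expl) : Set M.W :=
  {u | ∀ sub ∈ E.subtrees, u ∈ Uset M w sub}

/-- Agent 1 is not sure whether agent 2 can justify `F`:  ¬□₁△₂F. -/
def NotSure (M : Frame) (w : M.W) (F : PropForm) : Prop :=
  ¬ ∀ u, M.R 0 w u → ∃ t : Tm, t.Ground ∧ F ∈ M.star 1 t u

/-- `N(E)`: the hypotheses and deduction steps of `E` that agent 1 is not
sure agent 2 can justify. -/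
def Nset (M : Frame) (w : M.W) (E : Expl) : Set PropForm :=
  {F | (F ∈ E.hyps ∧ NotSure M w F) ∨
       ∃ p ∈ E.steps, p.2 = F ∧ NotSure M w (bigImp p.1 p.2)}

/-- The preference relation over explanations: `Pref M w E E'` means
`E ≾ E'` (`E'` is at least as preferred as `E`). -/
def Pref (M : Frame) (w : M.W) (E E' : Expl) : Prop :=
  (Nset M w E).ncard > (Nset M w E').ncard ∨
  ((Nset M w E).ncard = (Nset M w E').ncard ∧ E.dset.ncard ≥ E'.dset.ncard)

/-- `E` is available for agent 1 (index 0) to agent 2 (index 1) at `w`. -/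
def Available (M : Frame) (w : M.W) (E : Expl) : Prop :=
  (∀ A ∈ E.hyps, ∃ t : Tm, t.Ground ∧ A ∈ M.star 0 t w) ∧
  (∀ sub ∈ E.subtrees, sub.children ≠ [] →
      ∃ s : Tm, s.Ground ∧ DTerm M 0 w sub s ∧ sub.claim ∈ M.star 0 s w) ∧
  (∀ A ∈ E.hyps, ¬ ∀ u, M.R 0 w u → ¬ ∃ t : Tm, t.Ground ∧ A ∈ M.star 1 t u) ∧
  (∀ p ∈ E.steps,
      ¬ ∀ u, M.R 0 w u → ¬ ∃ t : Tm, t.Ground ∧ bigImp p.1 p.2 ∈ M.star 1 t u)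

/-- `λ(A, F)`: available explanations proving `F` from hypotheses `A`. -/
def lam (M : Frame) (w : M.W) (A : List PropForm) (F : PropForm) : Set Expl :=
  {E | E.claim = F ∧ (A ≠ [] → ∀ x, x ∈ E.hyps ↔ x ∈ A) ∧ Available M w E}

/-- `why(𝓕(E))`: the nodes of `E` with feedback value 0 all of whose
premises have feedback value 1. -/
def whySet (M : Frame) (w : M.W) (E : Expl) : Set Expl :=
  {sub | sub ∈ E.subtrees ∧ ¬ FVal M w sub ∧ ∀ c ∈ sub.children, FVal M w c}

/-- The candidate explanations after feedback on `prev`: available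
explanations for the initial claim `F` together with available explanations
for the formulas agent 2 asked about. -/
def Cands (M : Frame) (w : M.W) (F : PropForm) (prev : Expl) : Set Expl :=
  lam M w [] F ∪
    {E' | ∃ sub ∈ whySet M w prev,
        E' ∈ lam M w (sub.children.map Expl.claim) sub.claim}

/-- Most preferred explanations in a set of candidates. -/
def MostPref (M : Frame) (w : M.W) (X : Set Expl) (E : Expl) : Prop :=
  E ∈ X ∧ ∀ E' ∈ X, Pref M w E' E

/-- A state of the conversation: a model together with the actual world. -/
abbrev ConvState := Σ N : Frame, N.W

/-- Agent 2 learns from explanation `E` (an update of the model). -/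
def ExplStep (p q : ConvState) (E : Expl) : Prop :=
  ∃ (Dts : List (PropForm × Tm)) (r : Tm),
    GoodDerived p.1 p.2 E Dts r ∧ q = ⟨learnModel p.1 p.2 E Dts r, p.2⟩

/-- Agent 1 learns from agent 2's (truthful) feedback on `E`. -/
def FbStep (p q : ConvState) (E : Expl) : Prop :=
  ∃ hw : p.2 ∈ FeedbackSet p.1 p.2 E,
    q = ⟨p.1.restrict (FeedbackSet p.1 p.2 E) ⟨p.2, hw⟩, ⟨p.2, hw⟩⟩

/-- One round of the conversation: an explanation followed by feedback. -/
def RoundStep (p q : ConvState) (E : Expl) : Prop :=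
  ∃ mid : ConvState, ExplStep p mid E ∧ FbStep mid q E

lemma ground_foldl (d : Tm) (ts : List Tm) :
    (ts.foldl Tm.app d).Ground ↔ d.Ground ∧ ∀ t ∈ ts, t.Ground := by
  induction ts generalizing d with
  | nil => simp
  | cons a l ih =>
    simp only [List.foldl_cons, ih, Tm.Ground, List.mem_cons]
    constructor
    · rintro ⟨⟨h1, h2⟩, h3⟩
      exact ⟨h1, fun t ht => ht.elim (fun e => e ▸ h2) (h3 t)⟩
    · rintro ⟨h1, h2⟩
      exact ⟨⟨h1, h2 a (Or.inl rfl)⟩, fun t ht => h2 t (Or.inr ht)⟩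

lemma forall₂_mem_left {α β : Type*} {R : α → β → Prop} :
    ∀ {l : List α} {l' : List β}, List.Forall₂ R l l' → ∀ x ∈ l, ∃ y ∈ l', R x y := by
  intro l l' h
  induction h with
  | nil => simp
  | cons h _ ih =>
    intro x hx
    rcases List.mem_cons.1 hx with rfl | hx
    · exact ⟨_, List.mem_cons_self, h⟩
    · obtain ⟨y, hy, hR⟩ := ih x hx
      exact ⟨y, List.mem_cons_of_mem _ hy, hR⟩

lemma exists_forall₂ {α β : Type*} {R : α → β → Prop} {P : β → Prop} :
    ∀ (l : List α), (∀ x ∈ l, ∃ y, R x y ∧ P y) →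
      ∃ l', List.Forall₂ R l l' ∧ ∀ y ∈ l', P y := by
  intro l
  induction l with
  | nil => exact fun _ => ⟨[], List.Forall₂.nil, by simp⟩
  | cons a l ih =>
    intro h
    obtain ⟨y, hy, hPy⟩ := h a List.mem_cons_self
    obtain ⟨l', hl', hP⟩ := ih (fun x hx => h x (List.mem_cons_of_mem _ hx))
    refine ⟨y :: l', List.Forall₂.cons hy hl', ?_⟩
    intro z hz
    rcases List.mem_cons.1 hz with rfl | hz
    · exact hPy
    · exact hP z hz

lemma mem_hyps_cons {A : PropForm} {c : Expl} {cs : List Expl} {B : PropForm} :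
    A ∈ (Expl.node (c :: cs) B).hyps ↔ ∃ c' ∈ c :: cs, A ∈ c'.hyps := by
  rw [Expl.hyps]
  constructor
  · intro h
    simp only [List.mem_flatMap, List.mem_attach, true_and, Subtype.exists] at h
    obtain ⟨a, ha, hA⟩ := h
    exact ⟨a, ha, hA⟩
  · rintro ⟨c', hc', hA⟩
    simp only [List.mem_flatMap, List.mem_attach, true_and, Subtype.exists]
    exact ⟨c', hc', hA⟩

lemma mem_steps_cons {p : List PropForm × PropForm} {c : Expl} {cs : List Expl}
    {B : PropForm} :
    p ∈ (Expl.node (c :: cs) B).steps ↔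
      p = ((c :: cs).map Expl.claim, B) ∨ ∃ c' ∈ c :: cs, p ∈ c'.steps := by
  rw [Expl.steps]
  constructor
  · intro h
    rcases List.mem_cons.1 h with h | h
    · exact Or.inl h
    · simp only [List.mem_flatMap, List.mem_attach, true_and, Subtype.exists] at h
      obtain ⟨a, ha, hp⟩ := h
      exact Or.inr ⟨a, ha, hp⟩
  · rintro (rfl | ⟨c', hc', hp⟩)
    · exact List.mem_cons_self
    · refine List.mem_cons_of_mem _ ?_
      simp only [List.mem_flatMap, List.mem_attach, true_and, Subtype.exists]
      exact ⟨c', hc', hp⟩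

lemma understands_fwd (M : Frame) (w : M.W) :
    ∀ (n : ℕ) (E : Expl) (t : Tm), sizeOf E ≤ n → DTerm M 1 w E t → t.Ground →
      ((∀ A ∈ E.hyps, ∃ t : Tm, t.Ground ∧ A ∈ M.star 1 t w) ∧
       (∀ p ∈ E.steps, ∃ s : Tm, s.Ground ∧ bigImp p.1 p.2 ∈ M.star 1 s w)) := by
  intro n
  induction n with
  | zero =>
    intro E t hsz
    cases E with
    | node cs B => simp [Expl.node.sizeOf_spec] at hsz
  | succ n ih =>
    intro E t hsz hD hg
    cases hD with
    | @hyp_just A t htg ht =>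
      constructor
      · intro A' hA'
        rw [Expl.hyps] at hA'
        simp at hA'
        exact ⟨t, htg, hA' ▸ ht⟩
      · intro p hp
        rw [Expl.steps] at hp
        simp at hp
    | hyp_var h => exact absurd hg (by simp [Tm.Ground])
    | @step cs B d ts hne hd hj hlen hts =>
      rw [ground_foldl] at hg
      have hchild : ∀ c ∈ cs, sizeOf c ≤ n := by
        intro c hc
        have := List.sizeOf_lt_of_mem hc
        simp only [Expl.node.sizeOf_spec] at hsz
        omega
      have hIH : ∀ c ∈ cs,
          (∀ A ∈ c.hyps, ∃ t : Tm, t.Ground ∧ A ∈ M.star 1 t w) ∧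
          (∀ p ∈ c.steps, ∃ s : Tm, s.Ground ∧ bigImp p.1 p.2 ∈ M.star 1 s w) := by
        intro c hc
        obtain ⟨tc, htc, hRc⟩ := forall₂_mem_left hts c hc
        exact ih c tc (hchild c hc) hRc (hg.2 tc htc)
      obtain ⟨c, cs', rfl⟩ := List.exists_cons_of_ne_nil hne
      constructor
      · intro A hA
        rw [mem_hyps_cons] at hA
        obtain ⟨c', hc', hAc'⟩ := hA
        exact (hIH c' hc').1 A hAc'
      · intro p hp
        rw [mem_steps_cons] at hp
        rcases hp with rfl | ⟨c', hc', hpc'⟩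
        · exact ⟨d, hg.1, hj⟩
        · exact (hIH c' hc').2 p hpc'
    | step_var hne h => exact absurd hg (by simp [Tm.Ground])

lemma understands_bwd (M : Frame) (w : M.W) :
    ∀ (n : ℕ) (E : Expl), sizeOf E ≤ n →
      (∀ A ∈ E.hyps, ∃ t : Tm, t.Ground ∧ A ∈ M.star 1 t w) →
      (∀ p ∈ E.steps, ∃ s : Tm, s.Ground ∧ bigImp p.1 p.2 ∈ M.star 1 s w) →
      Understands M w E := by
  intro n
  induction n with
  | zero =>
    intro E hsz
    cases E with
    | node cs B => simp [Expl.node.sizeOf_spec] at hsz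
  | succ n ih =>
    intro E hsz h1 h2
    obtain ⟨cs, B⟩ := E
    cases cs with
    | nil =>
      obtain ⟨t, htg, ht⟩ := h1 B (by rw [Expl.hyps]; simp)
      exact ⟨t, DTerm.hyp_just htg ht, htg⟩
    | cons c cs' =>
      obtain ⟨d, hdg, hd⟩ := h2 ((c :: cs').map Expl.claim, B)
        (mem_steps_cons.2 (Or.inl rfl))
      have hch : ∀ c' ∈ c :: cs', ∃ t : Tm, DTerm M 1 w c' t ∧ t.Ground := by
        intro c' hc'
        apply ih c'
        · have := List.sizeOf_lt_of_mem hc'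
          simp only [Expl.node.sizeOf_spec] at hsz
          omega
        · intro A hA
          exact h1 A (mem_hyps_cons.2 ⟨c', hc', hA⟩)
        · intro p hp
          exact h2 p (mem_steps_cons.2 (Or.inr ⟨c', hc', hp⟩))
      obtain ⟨ts, hts, htsg⟩ := exists_forall₂ (c :: cs') hch
      refine ⟨ts.foldl Tm.app d,
        DTerm.step (by simp) hdg hd hts.length_eq.symm hts, ?_⟩
      rw [ground_foldl]
      exact ⟨hdg, htsg⟩

/-- Agent 2 understands `E` at `w` iff (a) every hypothesis of
`E` is justified by some ground term, and (b) for every deduction step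
(premises `A₁,…,Aₙ`, conclusion `G`) of `E` some ground term justifies
`A₁ → (⋯ → (Aₙ → G)⋯)`. -/
theorem understands_iff (M : Frame) (w : M.W) (E : Expl) :
    Understands M w E ↔
      ((∀ A ∈ E.hyps, ∃ t : Tm, t.Ground ∧ A ∈ M.star 1 t w) ∧
       (∀ p ∈ E.steps, ∃ s : Tm, s.Ground ∧ bigImp p.1 p.2 ∈ M.star 1 s w)) := by
  constructor
  · rintro ⟨t, ht, hg⟩
    exact understands_fwd M w (sizeOf E) E t le_rfl ht hg
  · rintro ⟨h1, h2⟩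
    exact understands_bwd M w (sizeOf E) E le_rfl h1 h2
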